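/- Let ν ∈ ℝ, a > 0, m ∈ ℕ, λ = (ν + 2m)/a with λ > -1, and let f⁻_l(r) = (2^{λ+1} l! / (a^λ Γ(λ + l + 1)))^{1/2} r^{-(ν + m)} L_l^{(λ)}((2/a) r^{-a}) e^{-(1/a) r^{-a}}. Then for every l ∈ ℕ and r > 0, -(i/2)( ((ν - a)/(-a)) f⁻_l(r) + (2/(-a)) r (f⁻_l)'(r) ) - (1/2)·(i/(-a)) r^{-a} f⁻_l(r) - (1/2)·(i/(-a)) r^{a}( r² (f⁻_l)''(r) + (ν + 1) r (f⁻_l)'(r) - m(ν + m) f⁻_l(r) ) = -i √((l + 1)(λ + l + 1)) · f⁻_{l+1}(r); that is, the operator π_{-a}(𝐧⁻) sends f⁻_l to -i √((l+1)(λ+l+1)) f⁻_{l+1}. -/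

import Mathlib

open Real Complex

/-- The generalized Laguerre polynomial
`L_l^{(λ)}(t) = ∑_{j=0}^{l} ((-1)^j / (j!(l-j)!)) (Γ(λ+l+1)/Γ(λ+j+1)) t^j`. -/
noncomputable def laguerre (lam : ℝ) (l : ℕ) (t : ℝ) : ℝ :=
  ∑ j ∈ Finset.range (l + 1),
    (-1 : ℝ) ^ j / (j.factorial * (l - j).factorial) *
      (Real.Gamma (lam + l + 1) / Real.Gamma (lam + j + 1)) * t ^ j

/-- `f⁻_l(r) = (2^{λ+1} l!/(a^λ Γ(λ+l+1)))^{1/2} r^{-(ν+m)} L_l^{(λ)}((2/a) r^{-a})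
e^{-(1/a) r^{-a}}`. -/
noncomputable def laguerreFunNeg (ν a : ℝ) (m : ℕ) (l : ℕ) (r : ℝ) : ℂ :=
  ((Real.sqrt ((2 : ℝ) ^ ((ν + 2 * m) / a + 1) * l.factorial /
        (a ^ ((ν + 2 * m) / a) * Real.Gamma ((ν + 2 * m) / a + l + 1))) *
      r ^ (-(ν + m)) * laguerre ((ν + 2 * m) / a) l ((2 / a) * r ^ (-a)) *
      Real.exp (-(1 / a) * r ^ (-a)) : ℝ) : ℂ)

open Polynomial Finset

noncomputable def lcoef (lam : ℝ) (l j : ℕ) : ℝ :=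
  (-1 : ℝ) ^ j / (j.factorial * (l - j).factorial) *
    (Real.Gamma (lam + l + 1) / Real.Gamma (lam + j + 1))

set_option maxHeartbeats 1000000 in
lemma interiorK (lam : ℝ) (hlam : -1 < lam) (l n : ℕ) (h : n + 2 ≤ l) :
    lcoef lam l (n+1+1) * (((n+1:ℕ):ℝ)+1) * ((n:ℝ)+1) + (lam+1)*(lcoef lam l (n+1+1)*(((n+1:ℕ):ℝ)+1))
      - 2*(lcoef lam l (n+1)*((n:ℝ)+1)) + lcoef lam l n - (lam+1)*lcoef lam l (n+1)
    = -((l:ℝ)+1)*lcoef lam (l+1) (n+1) := by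
  obtain ⟨k, rfl⟩ : ∃ k, l = n + 2 + k := ⟨l - (n+2), by omega⟩
  have hn : (0:ℝ) ≤ (n:ℝ) := Nat.cast_nonneg n
  have p1 : (0:ℝ) < lam + n + 1 := by linarith
  have p3 : (0:ℝ) < lam + ((n+2+k : ℕ):ℝ) + 1 := by push_cast; linarith [(Nat.cast_nonneg k : (0:ℝ) ≤ k)]
  have ea : Real.Gamma (lam + ((n+1+1 : ℕ):ℝ) + 1)
      = (lam+n+2)*((lam+n+1) * Real.Gamma (lam + n + 1)) := by
    have h1 : lam + ((n+1+1 : ℕ):ℝ) + 1 = (lam + n + 1 + 1) + 1 := by push_cast; ring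
    rw [h1, Real.Gamma_add_one (by linarith), Real.Gamma_add_one p1.ne']
    ring
  have eb : Real.Gamma (lam + ((n+1 : ℕ):ℝ) + 1) = (lam+n+1) * Real.Gamma (lam + n + 1) := by
    have h1 : lam + ((n+1 : ℕ):ℝ) + 1 = (lam + n + 1) + 1 := by push_cast; ring
    rw [h1, Real.Gamma_add_one p1.ne']
  have ec : Real.Gamma (lam + ((n+2+k+1 : ℕ):ℝ) + 1)
      = (lam + ((n+2+k:ℕ):ℝ) + 1) * Real.Gamma (lam + ((n+2+k:ℕ):ℝ) + 1) := by
    have h1 : lam + ((n+2+k+1 : ℕ):ℝ) + 1 = (lam + ((n+2+k:ℕ):ℝ) + 1) + 1 := by push_cast; ring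
    rw [h1, Real.Gamma_add_one p3.ne']
  simp only [lcoef, show n+2+k - (n+1+1) = k from by omega, show n+2+k - (n+1) = k+1 from by omega,
    show n+2+k - n = k+2 from by omega, show n+2+k+1 - (n+1) = k+2 from by omega,
    ea, eb, ec, Nat.factorial_succ, pow_succ]
  have hG : Real.Gamma (lam + n + 1) ≠ 0 := (Real.Gamma_pos_of_pos p1).ne'
  have hH : Real.Gamma (lam + ((n:ℝ) + 2 + (k:ℝ)) + 1) ≠ 0 := by
    have := (Real.Gamma_pos_of_pos p3).ne'
    push_cast at this ⊢; exact this
  have hnf : ((n.factorial : ℝ)) ≠ 0 := Nat.cast_ne_zero.mpr n.factorial_ne_zero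
  have hkf : ((k.factorial : ℝ)) ≠ 0 := Nat.cast_ne_zero.mpr k.factorial_ne_zero
  push_cast
  have hl1 : lam + (n:ℝ) + 1 ≠ 0 := p1.ne'
  have hl2 : lam + (n:ℝ) + 2 ≠ 0 := by linarith
  field_simp
  ring

lemma edgeL (lam : ℝ) (hlam : -1 < lam) (l n : ℕ) (hl : l = n + 1) :
    - 2*(lcoef lam l (n+1)*((n:ℝ)+1)) + lcoef lam l n - (lam+1)*lcoef lam l (n+1)
    = -((l:ℝ)+1)*lcoef lam (l+1) (n+1) := by
  subst hl
  have hn : (0:ℝ) ≤ (n:ℝ) := Nat.cast_nonneg n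
  have p1 : (0:ℝ) < lam + n + 1 := by linarith
  have eb : Real.Gamma (lam + ((n+1 : ℕ):ℝ) + 1) = (lam+n+1) * Real.Gamma (lam + n + 1) := by
    have h1 : lam + ((n+1 : ℕ):ℝ) + 1 = (lam + n + 1) + 1 := by push_cast; ring
    rw [h1, Real.Gamma_add_one p1.ne']
  have ec : Real.Gamma (lam + ((n+1+1 : ℕ):ℝ) + 1)
      = (lam+n+2)*((lam+n+1) * Real.Gamma (lam + n + 1)) := by
    have h1 : lam + ((n+1+1 : ℕ):ℝ) + 1 = (lam + n + 1 + 1) + 1 := by push_cast; ring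
    rw [h1, Real.Gamma_add_one (by linarith), Real.Gamma_add_one p1.ne']
    ring
  simp only [lcoef, show n+1 - (n+1) = 0 from by omega, show n+1 - n = 1 from by omega,
    show n+1+1 - (n+1) = 1 from by omega, eb, ec, Nat.factorial_succ, Nat.factorial_zero,
    Nat.factorial_one, pow_succ]
  have hG : Real.Gamma (lam + n + 1) ≠ 0 := (Real.Gamma_pos_of_pos p1).ne'
  have hnf : ((n.factorial : ℝ)) ≠ 0 := Nat.cast_ne_zero.mpr n.factorial_ne_zero
  push_cast
  have hl1 : lam + (n:ℝ) + 1 ≠ 0 := p1.ne'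
  have hl2 : lam + (n:ℝ) + 2 ≠ 0 := by linarith
  field_simp
  ring

lemma edgeT' (lam : ℝ) (hlam : -1 < lam) (n : ℕ) :
    lcoef lam n n = -((n:ℝ)+1) * lcoef lam (n+1) (n+1) := by
  simp only [lcoef, Nat.sub_self, Nat.factorial_zero, Nat.factorial_succ, pow_succ]
  have hnf : ((n.factorial : ℝ)) ≠ 0 := Nat.cast_ne_zero.mpr n.factorial_ne_zero
  have hn : (0:ℝ) ≤ (n:ℝ) := Nat.cast_nonneg n
  have h1 : Real.Gamma (lam + ((n:ℕ):ℝ) + 1) ≠ 0 := by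
    have p1 : (0:ℝ) < lam + ((n:ℕ):ℝ) + 1 := by linarith
    exact (Real.Gamma_pos_of_pos p1).ne'
  have h2 : Real.Gamma (lam + ((n+1:ℕ):ℝ) + 1) ≠ 0 := by
    have p1 : (0:ℝ) < lam + ((n+1:ℕ):ℝ) + 1 := by push_cast; linarith
    exact (Real.Gamma_pos_of_pos p1).ne'
  rw [div_self h1, div_self h2]
  push_cast
  field_simp

lemma edgeT (lam : ℝ) (hlam : -1 < lam) (l n : ℕ) (hl : l = n) :
    lcoef lam l n = -((l:ℝ)+1) * lcoef lam (l+1) (n+1) := by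
  cases hl
  exact edgeT' lam hlam _

lemma zeroCase (lam : ℝ) (hlam : -1 < lam) (l k : ℕ) (h : l = k + 1) :
    (0:ℝ) + (lam+1) * (lcoef lam l (0+1) * (((0:ℕ):ℝ)+1)) - 2*0 + 0 - (lam+1)*lcoef lam l 0
    = -((l:ℝ)+1) * lcoef lam (l+1) 0 := by
  subst h
  norm_num
  have hk : (0:ℝ) ≤ (k:ℝ) := Nat.cast_nonneg k
  have p1 : (0:ℝ) < lam + 1 := by linarith
  have p3 : (0:ℝ) < lam + ((k+1:ℕ):ℝ) + 1 := by push_cast; linarith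
  have eb : Real.Gamma (lam + ((1:ℕ):ℝ) + 1) = (lam+1) * Real.Gamma (lam + 1) := by
    have h1 : lam + ((1:ℕ):ℝ) + 1 = (lam + 1) + 1 := by push_cast; ring
    rw [h1, Real.Gamma_add_one p1.ne']
  have ec : Real.Gamma (lam + ((k+1+1 : ℕ):ℝ) + 1)
      = (lam + ((k+1:ℕ):ℝ) + 1) * Real.Gamma (lam + ((k+1:ℕ):ℝ) + 1) := by
    have h1 : lam + ((k+1+1 : ℕ):ℝ) + 1 = (lam + ((k+1:ℕ):ℝ) + 1) + 1 := by push_cast; ring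
    rw [h1, Real.Gamma_add_one p3.ne']
  simp only [lcoef, show k+1 - 1 = k from by omega, Nat.sub_zero, eb, ec,
    Nat.factorial_succ, Nat.factorial_zero, Nat.factorial_one, pow_succ, pow_zero]
  have hG : Real.Gamma (lam + 1) ≠ 0 := (Real.Gamma_pos_of_pos p1).ne'
  have hH : Real.Gamma (lam + ((k:ℝ) + 1) + 1) ≠ 0 := by
    have := (Real.Gamma_pos_of_pos p3).ne'
    push_cast at this ⊢; exact this
  have hkf : ((k.factorial : ℝ)) ≠ 0 := Nat.cast_ne_zero.mpr k.factorial_ne_zero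
  push_cast
  have hl1 : lam + 1 ≠ 0 := p1.ne'
  have hG' : Real.Gamma (1 + lam) ≠ 0 := by rw [add_comm]; exact hG
  field_simp
  ring_nf
  simp only [mul_assoc, mul_inv_cancel₀ hG', mul_one]
  ring

lemma zeroZero (lam : ℝ) (hlam : -1 < lam) (l : ℕ) (hl : l = 0) :
    -((lam+1)*lcoef lam l 0) = -((l:ℝ)+1)*lcoef lam (l+1) 0 := by
  subst hl
  norm_num
  have p1 : (0:ℝ) < lam + 1 := by linarith
  have ec : Real.Gamma (lam + ((1:ℕ):ℝ) + 1) = (lam+1) * Real.Gamma (lam + 1) := by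
    have h1 : lam + ((1:ℕ):ℝ) + 1 = (lam + 1) + 1 := by push_cast; ring
    rw [h1, Real.Gamma_add_one p1.ne']
  have hG : Real.Gamma (lam + 1) ≠ 0 := (Real.Gamma_pos_of_pos p1).ne'
  simp only [lcoef, ec]
  norm_num
  field_simp

noncomputable def lagPoly' (lam : ℝ) (l : ℕ) : ℝ[X] :=
  ∑ j ∈ Finset.range (l + 1), Polynomial.C (lcoef lam l j) * Polynomial.X ^ j

lemma lagPoly'_coeff (lam : ℝ) (l n : ℕ) :
    (lagPoly' lam l).coeff n = if n < l + 1 then lcoef lam l n else 0 := by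
  rw [lagPoly', Polynomial.finset_sum_coeff]
  simp only [Polynomial.coeff_C_mul, Polynomial.coeff_X_pow, mul_ite, mul_one, mul_zero]
  rw [Finset.sum_ite_eq (Finset.range (l+1)) n (fun j => lcoef lam l j)]
  simp [Finset.mem_range]

set_option maxHeartbeats 2000000 in
lemma key (lam : ℝ) (hlam : -1 < lam) (l : ℕ) :
    X * derivative (derivative (lagPoly' lam l))
      + C (lam + 1) * derivative (lagPoly' lam l)
      - C 2 * (X * derivative (lagPoly' lam l))
      + X * lagPoly' lam l
      - C (lam + 1) * lagPoly' lam l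
    = C (-(l + 1 : ℝ)) * lagPoly' lam (l + 1) := by
  ext n
  rcases n with _ | n
  · simp only [Polynomial.coeff_add, Polynomial.coeff_sub, Polynomial.coeff_C_mul,
      Polynomial.mul_coeff_zero, Polynomial.coeff_X_zero, Polynomial.coeff_C_zero, Polynomial.coeff_derivative,
      lagPoly'_coeff, zero_mul]
    split_ifs
    all_goals try (exfalso; omega)
    all_goals try ring1
    all_goals try linear_combination zeroCase lam hlam l (l-1) (by omega)
    all_goals try linear_combination zeroZero lam hlam l (by omega)
  · simp only [Polynomial.coeff_add, Polynomial.coeff_sub, Polynomial.coeff_C_mul,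
      Polynomial.coeff_X_mul, Polynomial.coeff_derivative, lagPoly'_coeff]
    split_ifs
    all_goals try (exfalso; omega)
    all_goals try ring1
    all_goals try linear_combination interiorK lam hlam l n (by omega)
    all_goals try linear_combination edgeL lam hlam l n (by omega)
    all_goals try linear_combination edgeT lam hlam l n (by omega)

lemma laguerre_eq_eval (lam : ℝ) (l : ℕ) (t : ℝ) :
    laguerre lam l t = (lagPoly' lam l).eval t := by
  simp only [lagPoly', lcoef, Polynomial.eval_finset_sum, Polynomial.eval_mul,
    Polynomial.eval_C, Polynomial.eval_pow, Polynomial.eval_X, laguerre]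

noncomputable def phiFun (a : ℝ) (p : Polynomial ℝ) (b : ℝ) (r : ℝ) : ℝ :=
  r ^ b * (Polynomial.eval ((2 / a) * r ^ (-a)) p * Real.exp (-(1 / a) * r ^ (-a)))

noncomputable def pert (p : Polynomial ℝ) : Polynomial ℝ :=
  p - Polynomial.C 2 * Polynomial.derivative p

noncomputable def cconst (a lam : ℝ) (k : ℕ) : ℝ :=
  Real.sqrt ((2 : ℝ) ^ (lam + 1) * k.factorial / (a ^ lam * Real.Gamma (lam + k + 1)))

lemma hasDerivAt_phiFun (a : ℝ) (ha : a ≠ 0) (p : Polynomial ℝ) (b r : ℝ) (hr : 0 < r) :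
    HasDerivAt (fun x => phiFun a p b x)
      (b * phiFun a p (b - 1) r + phiFun a (pert p) (b - a - 1) r) r := by
  have hneg : HasDerivAt (fun x : ℝ => x ^ (-a)) (-a * r ^ (-a - 1)) r :=
    Real.hasDerivAt_rpow_const (Or.inl hr.ne')
  have hP : HasDerivAt (fun x : ℝ => Polynomial.eval ((2 / a) * x ^ (-a)) p)
      (Polynomial.eval ((2 / a) * r ^ (-a)) (Polynomial.derivative p) *
        ((2 / a) * (-a * r ^ (-a - 1)))) r :=
    (Polynomial.hasDerivAt p _).comp r (hneg.const_mul _)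
  have hE : HasDerivAt (fun x : ℝ => Real.exp (-(1 / a) * x ^ (-a)))
      (Real.exp (-(1 / a) * r ^ (-a)) * (-(1 / a) * (-a * r ^ (-a - 1)))) r :=
    (Real.hasDerivAt_exp _).comp r (hneg.const_mul _)
  have hb : HasDerivAt (fun x : ℝ => x ^ b) (b * r ^ (b - 1)) r :=
    Real.hasDerivAt_rpow_const (Or.inl hr.ne')
  have H := hb.mul (hP.mul hE)
  have hsplit : r ^ (b - a - 1) = r ^ b * r ^ (-a - 1) := by
    rw [← Real.rpow_add hr]; ring_nf
  have hval : b * phiFun a p (b - 1) r + phiFun a (pert p) (b - a - 1) r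
      = b * r ^ (b - 1) * (Polynomial.eval ((2 / a) * r ^ (-a)) p * Real.exp (-(1 / a) * r ^ (-a)))
        + r ^ b * (Polynomial.eval ((2 / a) * r ^ (-a)) (Polynomial.derivative p) *
            ((2 / a) * (-a * r ^ (-a - 1))) * Real.exp (-(1 / a) * r ^ (-a))
          + Polynomial.eval ((2 / a) * r ^ (-a)) p *
            (Real.exp (-(1 / a) * r ^ (-a)) * (-(1 / a) * (-a * r ^ (-a - 1))))) := by
    simp only [phiFun, pert, Polynomial.eval_sub, Polynomial.eval_mul, Polynomial.eval_C, hsplit]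
    field_simp
    ring
  rw [hval]
  exact H

/-- The operator `π_{-a}(𝐧⁻) = -(i/2) H_{-a} - (1/2) E⁺_{-a} - (1/2) E⁻_{-a,m}` sends
`f⁻_l` to `-i √((l+1)(λ+l+1)) f⁻_{l+1}`, where `λ = (ν + 2m)/a`. -/
theorem laguerreFunNeg_lowering (ν a : ℝ) (ha : 0 < a) (m : ℕ)
    (hlam : -1 < (ν + 2 * m) / a) (l : ℕ) (r : ℝ) (hr : 0 < r) :
    -(Complex.I / 2) *
        ((((ν : ℂ) - a) / (-a : ℂ)) * laguerreFunNeg ν a m l r +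
          2 / (-a : ℂ) * (r : ℂ) * deriv (laguerreFunNeg ν a m l) r) -
      (1 / 2 : ℂ) * (Complex.I / (-a : ℂ)) * ((r ^ (-a) : ℝ) : ℂ) *
        laguerreFunNeg ν a m l r -
      (1 / 2 : ℂ) * (Complex.I / (-a : ℂ)) * ((r ^ a : ℝ) : ℂ) *
        ((r : ℂ) ^ 2 * deriv (deriv (laguerreFunNeg ν a m l)) r +
          ((ν : ℂ) + 1) * (r : ℂ) * deriv (laguerreFunNeg ν a m l) r -
          (m : ℂ) * ((ν : ℂ) + (m : ℂ)) * laguerreFunNeg ν a m l r)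
      = -Complex.I *
          (Real.sqrt ((l + 1) * ((ν + 2 * m) / a + l + 1)) : ℝ) *
          laguerreFunNeg ν a m (l + 1) r := by
  have hane : a ≠ 0 := ha.ne'
  have hrne : r ≠ 0 := hr.ne'
  set lam : ℝ := (ν + 2 * m) / a with hlamdef
  set bb : ℝ := -(ν + m) with hbbdef
  have hfun : ∀ k : ℕ, laguerreFunNeg ν a m k
      = fun x : ℝ => ((cconst a lam k * phiFun a (lagPoly' lam k) bb x : ℝ) : ℂ) := by
    intro k
    funext x
    simp only [laguerreFunNeg, cconst, phiFun, laguerre_eq_eval, hlamdef, hbbdef]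
    exact congrArg Complex.ofReal (by ring)
  set D1r : ℝ := cconst a lam l * (bb * phiFun a (lagPoly' lam l) (bb - 1) r
      + phiFun a (pert (lagPoly' lam l)) (bb - a - 1) r) with hD1rdef
  set D2r : ℝ := cconst a lam l * (bb * ((bb - 1) * phiFun a (lagPoly' lam l) (bb - 1 - 1) r
        + phiFun a (pert (lagPoly' lam l)) (bb - 1 - a - 1) r)
      + ((bb - a - 1) * phiFun a (pert (lagPoly' lam l)) (bb - a - 1 - 1) r
        + phiFun a (pert (pert (lagPoly' lam l))) (bb - a - 1 - a - 1) r)) with hD2rdef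
  have hD1 : ∀ x, 0 < x → HasDerivAt (fun y : ℝ => cconst a lam l * phiFun a (lagPoly' lam l) bb y)
      (cconst a lam l * (bb * phiFun a (lagPoly' lam l) (bb - 1) x
        + phiFun a (pert (lagPoly' lam l)) (bb - a - 1) x)) x :=
    fun x hx => (hasDerivAt_phiFun a hane (lagPoly' lam l) bb x hx).const_mul _
  have hd1 : deriv (laguerreFunNeg ν a m l) r = ((D1r : ℝ) : ℂ) := by
    rw [hfun l]
    exact ((hD1 r hr).ofReal_comp).deriv
  have hD2 : HasDerivAt (fun x : ℝ => cconst a lam l * (bb * phiFun a (lagPoly' lam l) (bb - 1) x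
      + phiFun a (pert (lagPoly' lam l)) (bb - a - 1) x)) D2r r :=
    (((hasDerivAt_phiFun a hane (lagPoly' lam l) (bb - 1) r hr).const_mul bb).add
      (hasDerivAt_phiFun a hane (pert (lagPoly' lam l)) (bb - a - 1) r hr)).const_mul _
  have hd2 : deriv (deriv (laguerreFunNeg ν a m l)) r = ((D2r : ℝ) : ℂ) := by
    have hev : deriv (laguerreFunNeg ν a m l)
        =ᶠ[nhds r] fun x : ℝ => ((cconst a lam l * (bb * phiFun a (lagPoly' lam l) (bb - 1) x
          + phiFun a (pert (lagPoly' lam l)) (bb - a - 1) x) : ℝ) : ℂ) := by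
      filter_upwards [isOpen_Ioi.mem_nhds (Set.mem_Ioi.mpr hr)] with x hx
      rw [hfun l]
      exact ((hD1 x hx).ofReal_comp).deriv
    rw [hev.deriv_eq]
    exact (hD2.ofReal_comp).deriv
  have hlampos : (0:ℝ) < lam + 1 := by linarith
  have hcpos : ∀ k : ℕ, 0 < cconst a lam k := by
    intro k
    have hk : (0:ℝ) ≤ (k:ℝ) := Nat.cast_nonneg k
    have hG : 0 < Real.Gamma (lam + k + 1) := Real.Gamma_pos_of_pos (by linarith)
    exact Real.sqrt_pos.mpr (div_pos (by positivity)
      (mul_pos (Real.rpow_pos_of_pos ha _) hG))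
  have hs : Real.sqrt (((l:ℝ) + 1) * (lam + (l:ℝ) + 1))
      = ((l:ℝ) + 1) * cconst a lam l / cconst a lam (l + 1) := by
    have hl : (0:ℝ) ≤ (l:ℝ) := Nat.cast_nonneg l
    have harg : (0:ℝ) < lam + (l:ℝ) + 1 := by linarith
    have hG : 0 < Real.Gamma (lam + (l:ℝ) + 1) := Real.Gamma_pos_of_pos harg
    have hG1 : Real.Gamma (lam + ((l+1:ℕ):ℝ) + 1)
        = (lam + (l:ℝ) + 1) * Real.Gamma (lam + (l:ℝ) + 1) := by
      rw [show lam + ((l+1:ℕ):ℝ) + 1 = (lam + (l:ℝ) + 1) + 1 from by push_cast; ring,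
        Real.Gamma_add_one harg.ne']
    rw [eq_div_iff (hcpos (l+1)).ne']
    simp only [cconst]
    rw [← Real.sqrt_mul (by positivity)]
    rw [show ((l:ℝ) + 1) = Real.sqrt (((l:ℝ)+1)^2) from (Real.sqrt_sq (by positivity)).symm]
    rw [← Real.sqrt_mul (by positivity)]
    congr 1
    rw [hG1, Nat.factorial_succ]
    have h2 : (0:ℝ) < (2:ℝ) ^ (lam + 1) := Real.rpow_pos_of_pos two_pos _
    have hap : (0:ℝ) < a ^ lam := Real.rpow_pos_of_pos ha _
    have hf : ((l.factorial : ℝ)) ≠ 0 := Nat.cast_ne_zero.mpr l.factorial_ne_zero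
    push_cast
    field_simp
    ring_nf
    rw [show (1 + (l:ℝ) * 2 + (l:ℝ) ^ 2) = ((l:ℝ) + 1) ^ 2 by ring]
    rw [Real.sqrt_sq (by positivity : (0:ℝ) ≤ (l:ℝ) + 1)]
    ring
  have KEYe := congrArg (Polynomial.eval ((2/a) * r ^ (-a))) (key lam hlam l)
  simp only [Polynomial.eval_add, Polynomial.eval_sub, Polynomial.eval_mul, Polynomial.eval_C,
    Polynomial.eval_X] at KEYe
  have REAL : (1/(2*a)) * ((ν - a + r ^ (-a)) * (cconst a lam l * phiFun a (lagPoly' lam l) bb r)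
        + 2 * (r * D1r) + r ^ a * (r ^ 2 * D2r + (ν + 1) * (r * D1r)
          - ((m:ℝ) * (ν + (m:ℝ))) * (cconst a lam l * phiFun a (lagPoly' lam l) bb r)))
      = -(Real.sqrt (((l:ℝ) + 1) * (lam + (l:ℝ) + 1))
          * (cconst a lam (l + 1) * phiFun a (lagPoly' lam (l + 1)) bb r)) := by
    have hl1 : ((l:ℝ) + 1) ≠ 0 := by positivity
    have hyne : r ^ (-a) ≠ 0 := (Real.rpow_pos_of_pos hr _).ne'
    have hνsub : ν = a * lam - 2 * (m:ℝ) := by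
      rw [hlamdef]; field_simp; ring
    have hEN : Polynomial.eval ((2/a) * r ^ (-a)) (lagPoly' lam (l+1))
        = -((2/a) * r ^ (-a) * Polynomial.eval ((2/a) * r ^ (-a))
              (Polynomial.derivative (Polynomial.derivative (lagPoly' lam l)))
            + (lam+1) * Polynomial.eval ((2/a) * r ^ (-a)) (Polynomial.derivative (lagPoly' lam l))
            - 2 * ((2/a) * r ^ (-a) * Polynomial.eval ((2/a) * r ^ (-a))
              (Polynomial.derivative (lagPoly' lam l)))
            + (2/a) * r ^ (-a) * Polynomial.eval ((2/a) * r ^ (-a)) (lagPoly' lam l)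
            - (lam+1) * Polynomial.eval ((2/a) * r ^ (-a)) (lagPoly' lam l)) / ((l:ℝ)+1) := by
      rw [eq_div_iff hl1]
      linear_combination KEYe
    have hx1 : r ^ (bb - 1) = r ^ bb * r⁻¹ := by
      rw [show bb - 1 = bb + (-1) from by ring, Real.rpow_add hr, Real.rpow_neg_one]
    have hx2 : r ^ (bb - 1 - 1) = r ^ bb * r⁻¹ * r⁻¹ := by
      rw [show bb - 1 - 1 = bb + (-1) + (-1) from by ring, Real.rpow_add hr, Real.rpow_add hr,
        Real.rpow_neg_one]
    have hx3 : r ^ (bb - a - 1) = r ^ bb * r ^ (-a) * r⁻¹ := by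
      rw [show bb - a - 1 = bb + (-a) + (-1) from by ring, Real.rpow_add hr, Real.rpow_add hr,
        Real.rpow_neg_one]
    have hx4 : r ^ (bb - 1 - a - 1) = r ^ bb * r ^ (-a) * r⁻¹ * r⁻¹ := by
      rw [show bb - 1 - a - 1 = bb + (-a) + (-1) + (-1) from by ring, Real.rpow_add hr,
        Real.rpow_add hr, Real.rpow_add hr, Real.rpow_neg_one]
    have hx5 : r ^ (bb - a - 1 - 1) = r ^ bb * r ^ (-a) * r⁻¹ * r⁻¹ := by
      rw [show bb - a - 1 - 1 = bb + (-a) + (-1) + (-1) from by ring, Real.rpow_add hr,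
        Real.rpow_add hr, Real.rpow_add hr, Real.rpow_neg_one]
    have hx6 : r ^ (bb - a - 1 - a - 1) = r ^ bb * r ^ (-a) * r ^ (-a) * r⁻¹ * r⁻¹ := by
      rw [show bb - a - 1 - a - 1 = bb + (-a) + (-a) + (-1) + (-1) from by ring,
        Real.rpow_add hr, Real.rpow_add hr, Real.rpow_add hr, Real.rpow_add hr,
        Real.rpow_neg_one]
    have hra : r ^ a = (r ^ (-a))⁻¹ := by rw [Real.rpow_neg hr.le, inv_inv]
    rw [hs, hD1rdef, hD2rdef]
    simp only [phiFun, pert, Polynomial.eval_sub, Polynomial.eval_mul, Polynomial.eval_C,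
      Polynomial.derivative_sub, Polynomial.derivative_C_mul]
    rw [hEN, hx6, hx4, hx5, hx2, hx3, hx1, hra, hbbdef, hνsub]
    have hcn := (hcpos (l+1)).ne'
    field_simp
    ring
  rw [congrFun (hfun l) r, congrFun (hfun (l + 1)) r, hd1, hd2]
  have CC := congrArg (fun t : ℝ => (t : ℂ)) REAL
  push_cast at CC
  push_cast
  linear_combination Complex.I * CC
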